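/- If m → G ← n and n → H ← p are monogamous cospans of hypergraphs with discrete interfaces, then their composite cospan m → G+_n H ← p (obtained by pushout, i.e. by gluing G and H along the common interface n) is again monogamous. -/

import Mathlib

namespace SDRT

/-- A directed hypergraph: a set of nodes and, for each hyperedge, an ordered
list of source nodes and an ordered list of target nodes.  A `(k,l)`-hyperedge
is a hyperedge with `k` sources and `l` targets. -/
structure Hyp : Type 1 where
  V : Type
  E : Type
  src : E → List V
  tgt : E → List V

namespace Hyp

/-- The set of pairs `(h, i)` such that `v` is the `i`-th target of the hyperedge `h`.
The in-degree of `v` is the number of such pairs. -/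
def inPairs (G : Hyp) (v : G.V) : Set (G.E × ℕ) := {p | (G.tgt p.1)[p.2]? = some v}

/-- The set of pairs `(h, j)` such that `v` is the `j`-th source of the hyperedge `h`.
The out-degree of `v` is the number of such pairs. -/
def outPairs (G : Hyp) (v : G.V) : Set (G.E × ℕ) := {p | (G.src p.1)[p.2]? = some v}

/-- `v` has in-degree `0`. -/
def inDegZero (G : Hyp) (v : G.V) : Prop := G.inPairs v = ∅

/-- `v` has in-degree `1`. -/
def inDegOne (G : Hyp) (v : G.V) : Prop := ∃! p, p ∈ G.inPairs v

/-- `v` has out-degree `0`. -/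
def outDegZero (G : Hyp) (v : G.V) : Prop := G.outPairs v = ∅

/-- `v` has out-degree `1`. -/
def outDegOne (G : Hyp) (v : G.V) : Prop := ∃! p, p ∈ G.outPairs v

/-- `h'` is a successor of `h` if some node is both a target of `h` and a source of `h'`. -/
def Successor (G : Hyp) (h h' : G.E) : Prop := ∃ v, v ∈ G.tgt h ∧ v ∈ G.src h'

/-- `l` is a path (nonempty sequence of hyperedges, each a successor of the previous)
from the node `v` to the node `v'`: `v` is among the sources of the first hyperedge
and `v'` among the targets of the last one. -/
def PathFrom (G : Hyp) (l : List G.E) (v v' : G.V) : Prop :=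
  ∃ hne : l ≠ [], l.Chain' G.Successor ∧ v ∈ G.src (l.head hne) ∧ v' ∈ G.tgt (l.getLast hne)

/-- `l` is a path from the hyperedge `h` to the hyperedge `h'`. -/
def EdgePath (G : Hyp) (l : List G.E) (h h' : G.E) : Prop :=
  ∃ hne : l ≠ [], l.Chain' G.Successor ∧ l.head hne = h ∧ l.getLast hne = h'

/-- A hypergraph is acyclic if there is no path from a node to itself. -/
def Acyclic (G : Hyp) : Prop := ∀ (v : G.V) (l : List G.E), ¬ G.PathFrom l v v

end Hyp

/-- A subhypergraph: a set of nodes and hyperedges closed under taking the sources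
and targets of its hyperedges. -/
structure SubHyp (G : Hyp) where
  nodes : Set G.V
  edges : Set G.E
  src_mem : ∀ e ∈ edges, ∀ v ∈ G.src e, v ∈ nodes
  tgt_mem : ∀ e ∈ edges, ∀ v ∈ G.tgt e, v ∈ nodes

/-- A subhypergraph `H` of `G` is convex if every path in `G` between nodes of `H`
consists only of hyperedges of `H`. -/
def SubHyp.Convex {G : Hyp} (H : SubHyp G) : Prop :=
  ∀ v ∈ H.nodes, ∀ v' ∈ H.nodes, ∀ l, G.PathFrom l v v' → ∀ e ∈ l, e ∈ H.edges

/-- The hypergraph underlying a subhypergraph. -/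
def SubHyp.toHyp {G : Hyp} (H : SubHyp G) : Hyp where
  V := H.nodes
  E := H.edges
  src := fun e => (G.src e.1).pmap (fun v hv => (⟨v, hv⟩ : H.nodes))
    (fun v hv => H.src_mem e.1 e.2 v hv)
  tgt := fun e => (G.tgt e.1).pmap (fun v hv => (⟨v, hv⟩ : H.nodes))
    (fun v hv => H.tgt_mem e.1 e.2 v hv)

/-- A cospan of hypergraphs with discrete interfaces `m → G ← n`. -/
structure Cospan (m n : Type) : Type 1 where
  G : Hyp
  inp : m → G.V
  out : n → G.V

namespace Cospan

/-- A cospan is monogamous if both legs are injective, nodes in the image of the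
input leg have in-degree 0, all other nodes have in-degree 1, nodes in the image
of the output leg have out-degree 0, and all other nodes have out-degree 1. -/
def Monogamous {m n : Type} (A : Cospan m n) : Prop :=
  Function.Injective A.inp ∧ Function.Injective A.out ∧
  (∀ v ∈ Set.range A.inp, A.G.inDegZero v) ∧
  (∀ v ∉ Set.range A.inp, A.G.inDegOne v) ∧
  (∀ v ∈ Set.range A.out, A.G.outDegZero v) ∧
  (∀ v ∉ Set.range A.out, A.G.outDegOne v)

/-- A cospan is acyclic if its carrier is. -/
def Acyclic {m n : Type} (A : Cospan m n) : Prop := A.G.Acyclic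

/-- Composition of cospans by pushout: glue `G` and `H` along the common
interface `n`, identifying `A.out k` with `B.inp k` for every `k : n`. -/
def comp {m n p : Type} (A : Cospan m n) (B : Cospan n p) : Cospan m p where
  G := { V := Quot (fun x y : A.G.V ⊕ B.G.V =>
                      ∃ k : n, x = Sum.inl (A.out k) ∧ y = Sum.inr (B.inp k))
         E := A.G.E ⊕ B.G.E
         src := Sum.elim (fun e => (A.G.src e).map (fun v => Quot.mk _ (Sum.inl v)))
                         (fun e => (B.G.src e).map (fun v => Quot.mk _ (Sum.inr v)))
         tgt := Sum.elim (fun e => (A.G.tgt e).map (fun v => Quot.mk _ (Sum.inl v)))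
                         (fun e => (B.G.tgt e).map (fun v => Quot.mk _ (Sum.inr v))) }
  inp := fun x => Quot.mk _ (Sum.inl (A.inp x))
  out := fun y => Quot.mk _ (Sum.inr (B.out y))

/-- Monoidal product (tensor) of cospans: disjoint union of the carriers, with
the evident interface maps. -/
def tensor {m₁ n₁ m₂ n₂ : Type} (A : Cospan m₁ n₁) (B : Cospan m₂ n₂) :
    Cospan (m₁ ⊕ m₂) (n₁ ⊕ n₂) where
  G := { V := A.G.V ⊕ B.G.V
         E := A.G.E ⊕ B.G.E
         src := Sum.elim (fun e => (A.G.src e).map Sum.inl) (fun e => (B.G.src e).map Sum.inr)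
         tgt := Sum.elim (fun e => (A.G.tgt e).map Sum.inl) (fun e => (B.G.tgt e).map Sum.inr) }
  inp := Sum.elim (fun x => Sum.inl (A.inp x)) (fun x => Sum.inr (B.inp x))
  out := Sum.elim (fun y => Sum.inl (A.out y)) (fun y => Sum.inr (B.out y))

/-- The identity cospan on `k`: the discrete hypergraph on `k` with identity legs. -/
def idCospan (k : Type) : Cospan k k where
  G := { V := k, E := Empty, src := Empty.elim, tgt := Empty.elim }
  inp := id
  out := id

end Cospan

/-- An isomorphism of cospans: a hypergraph isomorphism of the carriers commuting
with the interface legs. -/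
structure CospanIso {m n : Type} (A B : Cospan m n) where
  nodeEquiv : A.G.V ≃ B.G.V
  edgeEquiv : A.G.E ≃ B.G.E
  src_eq : ∀ e, B.G.src (edgeEquiv e) = (A.G.src e).map nodeEquiv
  tgt_eq : ∀ e, B.G.tgt (edgeEquiv e) = (A.G.tgt e).map nodeEquiv
  inp_eq : ∀ x, nodeEquiv (A.inp x) = B.inp x
  out_eq : ∀ y, nodeEquiv (A.out y) = B.out y

/-- Two cospans are isomorphic if there is an isomorphism between them. -/
def Cospan.Isomorphic {m n : Type} (A B : Cospan m n) : Prop := Nonempty (CospanIso A B)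

/-- A homomorphism of hypergraphs: maps nodes to nodes and hyperedges to
hyperedges, preserving the ordered lists of sources and targets. -/
structure HypHom (G H : Hyp) where
  nodeMap : G.V → H.V
  edgeMap : G.E → H.E
  src_eq : ∀ e, H.src (edgeMap e) = (G.src e).map nodeMap
  tgt_eq : ∀ e, H.tgt (edgeMap e) = (G.tgt e).map nodeMap

/-- The image of a hypergraph homomorphism, as a subhypergraph of the codomain. -/
def HypHom.image {G H : Hyp} (f : HypHom G H) : SubHyp H where
  nodes := Set.range f.nodeMap
  edges := Set.range f.edgeMap
  src_mem := by
    rintro e ⟨e', rfl⟩ v hv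
    rw [f.src_eq] at hv
    rcases List.mem_map.mp hv with ⟨w, -, rfl⟩
    exact ⟨w, rfl⟩
  tgt_mem := by
    rintro e ⟨e', rfl⟩ v hv
    rw [f.tgt_eq] at hv
    rcases List.mem_map.mp hv with ⟨w, -, rfl⟩
    exact ⟨w, rfl⟩


/-- If `m → G ← n` and `n → H ← p` are monogamous cospans of
hypergraphs with discrete interfaces, then their composite cospan
`m → G +_n H ← p` (obtained by pushout, gluing along the common interface `n`)
is again monogamous. -/
theorem composition_monogamous {m n p : Type} [Finite m] [Finite n] [Finite p]
    (A : Cospan m n) (B : Cospan n p)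
    (hA : A.Monogamous) (hB : B.Monogamous) :
    (A.comp B).Monogamous := by
  classical
  obtain ⟨hAi, hAo, hAz, hA1, hAoz, hAo1⟩ := hA
  obtain ⟨hBi, hBo, hBz, hB1, hBoz, hBo1⟩ := hB
  -- a normalization map on representatives, used to invert `Quot.mk`
  set g : A.G.V ⊕ B.G.V → A.G.V ⊕ B.G.V :=
    Sum.elim (fun a => Sum.inl a)
      (fun b => if h : ∃ k, B.inp k = b then Sum.inl (A.out h.choose) else Sum.inr b) with hgdef
  have hgr : ∀ x y : A.G.V ⊕ B.G.V,
      (∃ k : n, x = Sum.inl (A.out k) ∧ y = Sum.inr (B.inp k)) → g x = g y := by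
    rintro _ _ ⟨k, rfl, rfl⟩
    have h : ∃ k', B.inp k' = B.inp k := ⟨k, rfl⟩
    have hk : h.choose = k := hBi h.choose_spec
    simp only [hgdef, Sum.elim_inl, Sum.elim_inr]
    rw [dif_pos h, hk]
  have key : ∀ x y : A.G.V ⊕ B.G.V,
      (Quot.mk _ x : (A.comp B).G.V) = Quot.mk _ y → g x = g y := by
    intro x y h
    exact congrArg (Quot.lift g hgr) h
  have inl_inj : ∀ a a' : A.G.V,
      (Quot.mk _ (Sum.inl a) : (A.comp B).G.V) = Quot.mk _ (Sum.inl a') → a = a' := by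
    intro a a' h
    have := key _ _ h
    simpa [hgdef] using this
  have inr_inj : ∀ b b' : B.G.V,
      (Quot.mk _ (Sum.inr b) : (A.comp B).G.V) = Quot.mk _ (Sum.inr b') → b = b' := by
    intro b b' h
    have hgg := key _ _ h
    simp only [hgdef, Sum.elim_inr] at hgg
    by_cases h1 : ∃ k, B.inp k = b <;> by_cases h2 : ∃ k, B.inp k = b'
    · rw [dif_pos h1, dif_pos h2] at hgg
      have hk : h1.choose = h2.choose := hAo (Sum.inl.inj hgg)
      rw [← h1.choose_spec, ← h2.choose_spec, hk]
    · rw [dif_pos h1, dif_neg h2] at hgg; exact absurd hgg (by simp)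
    · rw [dif_neg h1, dif_pos h2] at hgg; exact absurd hgg (by simp)
    · rw [dif_neg h1, dif_neg h2] at hgg; exact Sum.inr.inj hgg
  have inl_inr : ∀ (a : A.G.V) (b : B.G.V),
      (Quot.mk _ (Sum.inl a) : (A.comp B).G.V) = Quot.mk _ (Sum.inr b) →
        ∃ k, a = A.out k ∧ b = B.inp k := by
    intro a b h
    have hgg := key _ _ h
    simp only [hgdef, Sum.elim_inl, Sum.elim_inr] at hgg
    by_cases h1 : ∃ k, B.inp k = b
    · rw [dif_pos h1] at hgg
      exact ⟨h1.choose, Sum.inl.inj hgg, h1.choose_spec.symm⟩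
    · rw [dif_neg h1] at hgg; exact absurd hgg (by simp)
  have glue : ∀ k : n,
      (Quot.mk _ (Sum.inl (A.out k)) : (A.comp B).G.V) = Quot.mk _ (Sum.inr (B.inp k)) :=
    fun k => Quot.sound ⟨k, rfl, rfl⟩
  -- membership characterizations
  have mem_in_l : ∀ (e : A.G.E) (i : ℕ) (q : (A.comp B).G.V),
      ((Sum.inl e, i) : (A.comp B).G.E × ℕ) ∈ (A.comp B).G.inPairs q ↔
        ∃ w, (e, i) ∈ A.G.inPairs w ∧ (Quot.mk _ (Sum.inl w) : (A.comp B).G.V) = q := by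
    intro e i q
    change (List.map (fun v => (Quot.mk _ (Sum.inl v) : (A.comp B).G.V)) (A.G.tgt e))[i]? = some q ↔ _
    rw [List.getElem?_map]
    exact Option.map_eq_some_iff
  have mem_in_r : ∀ (e : B.G.E) (i : ℕ) (q : (A.comp B).G.V),
      ((Sum.inr e, i) : (A.comp B).G.E × ℕ) ∈ (A.comp B).G.inPairs q ↔
        ∃ w, (e, i) ∈ B.G.inPairs w ∧ (Quot.mk _ (Sum.inr w) : (A.comp B).G.V) = q := by
    intro e i q
    change (List.map (fun v => (Quot.mk _ (Sum.inr v) : (A.comp B).G.V)) (B.G.tgt e))[i]? = some q ↔ _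
    rw [List.getElem?_map]
    exact Option.map_eq_some_iff
  have mem_out_l : ∀ (e : A.G.E) (i : ℕ) (q : (A.comp B).G.V),
      ((Sum.inl e, i) : (A.comp B).G.E × ℕ) ∈ (A.comp B).G.outPairs q ↔
        ∃ w, (e, i) ∈ A.G.outPairs w ∧ (Quot.mk _ (Sum.inl w) : (A.comp B).G.V) = q := by
    intro e i q
    change (List.map (fun v => (Quot.mk _ (Sum.inl v) : (A.comp B).G.V)) (A.G.src e))[i]? = some q ↔ _
    rw [List.getElem?_map]
    exact Option.map_eq_some_iff
  have mem_out_r : ∀ (e : B.G.E) (i : ℕ) (q : (A.comp B).G.V),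
      ((Sum.inr e, i) : (A.comp B).G.E × ℕ) ∈ (A.comp B).G.outPairs q ↔
        ∃ w, (e, i) ∈ B.G.outPairs w ∧ (Quot.mk _ (Sum.inr w) : (A.comp B).G.V) = q := by
    intro e i q
    change (List.map (fun v => (Quot.mk _ (Sum.inr v) : (A.comp B).G.V)) (B.G.src e))[i]? = some q ↔ _
    rw [List.getElem?_map]
    exact Option.map_eq_some_iff
  -- in-degree one for left nodes not in the input interface
  have inOneL : ∀ a : A.G.V,
      (Quot.mk _ (Sum.inl a) : (A.comp B).G.V) ∉ Set.range (A.comp B).inp →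
      (A.comp B).G.inDegOne (Quot.mk _ (Sum.inl a)) := by
    intro a ha
    have haA : a ∉ Set.range A.inp := by
      rintro ⟨x, rfl⟩; exact ha ⟨x, rfl⟩
    obtain ⟨⟨e0, i0⟩, h0, hu⟩ := hA1 a haA
    refine ⟨(Sum.inl e0, i0), (mem_in_l e0 i0 _).mpr ⟨a, h0, rfl⟩, ?_⟩
    rintro ⟨e, i⟩ hmem
    cases e with
    | inl e =>
      obtain ⟨w, hw, hq⟩ := (mem_in_l e i _).mp hmem
      obtain rfl : w = a := inl_inj _ _ hq
      have h2 : (e, i) = (e0, i0) := hu (e, i) hw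
      injection h2 with h3 h4
      subst h3; subst h4; rfl
    | inr e =>
      obtain ⟨w, hw, hq⟩ := (mem_in_r e i _).mp hmem
      obtain ⟨k, hk1, rfl⟩ := inl_inr _ _ hq.symm
      have hz := hBz _ ⟨k, rfl⟩
      rw [Hyp.inDegZero] at hz
      rw [hz] at hw
      exact absurd hw (Set.notMem_empty _)
  -- out-degree one for right nodes not in the output interface
  have outOneR : ∀ b : B.G.V,
      (Quot.mk _ (Sum.inr b) : (A.comp B).G.V) ∉ Set.range (A.comp B).out →
      (A.comp B).G.outDegOne (Quot.mk _ (Sum.inr b)) := by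
    intro b hb
    have hbB : b ∉ Set.range B.out := by
      rintro ⟨y, rfl⟩; exact hb ⟨y, rfl⟩
    obtain ⟨⟨e0, i0⟩, h0, hu⟩ := hBo1 b hbB
    refine ⟨(Sum.inr e0, i0), (mem_out_r e0 i0 _).mpr ⟨b, h0, rfl⟩, ?_⟩
    rintro ⟨e, i⟩ hmem
    cases e with
    | inl e =>
      obtain ⟨w, hw, hq⟩ := (mem_out_l e i _).mp hmem
      obtain ⟨k, rfl, hk2⟩ := inl_inr _ _ hq
      have hz := hAoz _ ⟨k, rfl⟩
      rw [Hyp.outDegZero] at hz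
      rw [hz] at hw
      exact absurd hw (Set.notMem_empty _)
    | inr e =>
      obtain ⟨w, hw, hq⟩ := (mem_out_r e i _).mp hmem
      obtain rfl : w = b := inr_inj _ _ hq
      have h2 : (e, i) = (e0, i0) := hu (e, i) hw
      injection h2 with h3 h4
      subst h3; subst h4; rfl
  refine ⟨?_, ?_, ?_, ?_, ?_, ?_⟩
  · intro x y h
    exact hAi (inl_inj _ _ h)
  · intro x y h
    exact hBo (inr_inj _ _ h)
  · rintro v ⟨x, rfl⟩
    rw [Hyp.inDegZero, Set.eq_empty_iff_forall_notMem]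
    rintro ⟨e, i⟩ hmem
    cases e with
    | inl e =>
      obtain ⟨w, hw, hq⟩ := (mem_in_l e i _).mp hmem
      obtain rfl : w = A.inp x := inl_inj _ _ hq
      have hz := hAz _ ⟨x, rfl⟩
      rw [Hyp.inDegZero] at hz
      rw [hz] at hw
      exact absurd hw (Set.notMem_empty _)
    | inr e =>
      obtain ⟨w, hw, hq⟩ := (mem_in_r e i _).mp hmem
      obtain ⟨k, hk1, rfl⟩ := inl_inr _ _ hq.symm
      have hz := hBz _ ⟨k, rfl⟩
      rw [Hyp.inDegZero] at hz
      rw [hz] at hw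
      exact absurd hw (Set.notMem_empty _)
  · intro v hv
    induction v using Quot.ind with
    | _ s =>
      cases s with
      | inl a => exact inOneL a hv
      | inr b =>
        by_cases hb : ∃ k, B.inp k = b
        · obtain ⟨k, rfl⟩ := hb
          rw [← glue k] at hv ⊢
          exact inOneL _ hv
        · obtain ⟨⟨e0, i0⟩, h0, hu⟩ := hB1 b (fun ⟨k, hk⟩ => hb ⟨k, hk⟩)
          refine ⟨(Sum.inr e0, i0), (mem_in_r e0 i0 _).mpr ⟨b, h0, rfl⟩, ?_⟩
          rintro ⟨e, i⟩ hmem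
          cases e with
          | inl e =>
            obtain ⟨w, hw, hq⟩ := (mem_in_l e i _).mp hmem
            obtain ⟨k, hk1, hk2⟩ := inl_inr _ _ hq
            exact absurd ⟨k, hk2.symm⟩ hb
          | inr e =>
            obtain ⟨w, hw, hq⟩ := (mem_in_r e i _).mp hmem
            obtain rfl : w = b := inr_inj _ _ hq
            have h2 : (e, i) = (e0, i0) := hu (e, i) hw
            injection h2 with h3 h4
            subst h3; subst h4; rfl
  · rintro v ⟨y, rfl⟩
    rw [Hyp.outDegZero, Set.eq_empty_iff_forall_notMem]
    rintro ⟨e, i⟩ hmem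
    cases e with
    | inl e =>
      obtain ⟨w, hw, hq⟩ := (mem_out_l e i _).mp hmem
      obtain ⟨k, rfl, hk2⟩ := inl_inr _ _ hq
      have hz := hAoz _ ⟨k, rfl⟩
      rw [Hyp.outDegZero] at hz
      rw [hz] at hw
      exact absurd hw (Set.notMem_empty _)
    | inr e =>
      obtain ⟨w, hw, hq⟩ := (mem_out_r e i _).mp hmem
      obtain rfl : w = B.out y := inr_inj _ _ hq
      have hz := hBoz _ ⟨y, rfl⟩
      rw [Hyp.outDegZero] at hz
      rw [hz] at hw
      exact absurd hw (Set.notMem_empty _)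
  · intro v hv
    induction v using Quot.ind with
    | _ s =>
      cases s with
      | inr b => exact outOneR b hv
      | inl a =>
        by_cases ha : ∃ k, A.out k = a
        · obtain ⟨k, rfl⟩ := ha
          rw [glue k] at hv ⊢
          exact outOneR _ hv
        · obtain ⟨⟨e0, i0⟩, h0, hu⟩ := hAo1 a (fun ⟨k, hk⟩ => ha ⟨k, hk⟩)
          refine ⟨(Sum.inl e0, i0), (mem_out_l e0 i0 _).mpr ⟨a, h0, rfl⟩, ?_⟩
          rintro ⟨e, i⟩ hmem
          cases e with
          | inl e =>
            obtain ⟨w, hw, hq⟩ := (mem_out_l e i _).mp hmem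
            obtain rfl : w = a := inl_inj _ _ hq
            have h2 : (e, i) = (e0, i0) := hu (e, i) hw
            injection h2 with h3 h4
            subst h3; subst h4; rfl
          | inr e =>
            obtain ⟨w, hw, hq⟩ := (mem_out_r e i _).mp hmem
            obtain ⟨k, hk1, hk2⟩ := inl_inr _ _ hq.symm
            exact absurd ⟨k, hk1.symm⟩ ha

end SDRT
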